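/- Let L₀, L₁ : ℂ[x] → ℂ be linear functionals admitting MOPs {P_n^{(0)}}, {P_n^{(1)}} with normalizations h_n^{(0)}, h_n^{(1)}. Suppose there are polynomials Λ₂(x) = ∑_{i=0}^{2} λ_i^{(2)} x^i with λ₂^{(2)} ≠ 0 and Λ₃(x) = ∑_{i=0}^{3} λ_i^{(3)} x^i such that λ₂^{(2)} + (n−1)λ₃^{(3)} ≠ 0 for every n ≥ 1, and such that L₁[Δp] = −L₀[Λ₂·p] and L₁[p] = L₀[Λ₃·p] for every p ∈ ℂ[x]. Then {L₀, L₁} is a Δ-coherent pair of the second kind: for every n ≥ 1, ΔP_{n+1}^{(0)} = (n+1)(P_n^{(1)} − τ_n P_{n−1}^{(1)}) where τ_n = [λ₂^{(2)} + (n−1)λ₃^{(3)}]/(n+1) · h_{n+1}^{(0)}/h_{n−1}^{(1)}, and τ_n ≠ 0. -/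

import Mathlib

open Polynomial

/-- The forward difference of a polynomial: `(Δp)(x) = p(x+1) − p(x)`. -/
noncomputable def polyDelta (p : Polynomial ℂ) : Polynomial ℂ :=
  p.comp (X + C 1) - p

lemma comp_coeff (q : ℂ[X]) (N m : ℕ) (hN : q.natDegree < N) :
    (q.comp (X + C 1)).coeff m = ∑ k ∈ Finset.range N, q.coeff k * (k.choose m : ℂ) := by
  conv_lhs => rw [q.as_sum_range' N hN]
  rw [Polynomial.sum_comp, finset_sum_coeff]
  apply Finset.sum_congr rfl
  intro k _
  rw [monomial_comp, coeff_C_mul]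
  have : (X + C 1 : ℂ[X]) = X + 1 := by simp
  rw [this, coeff_X_add_one_pow]

lemma polyDelta_coeff_eq_zero (q : ℂ[X]) (d m : ℕ) (hq : q.degree ≤ (d : ℕ)) (hm : d ≤ m) :
    (polyDelta q).coeff m = 0 := by
  rw [polyDelta, coeff_sub, comp_coeff q (q.natDegree + 1) m (Nat.lt_succ_self _)]
  rw [Finset.sum_eq_single m]
  · simp [Nat.choose_self]
  · intro b _ hb
    rcases lt_or_gt_of_ne hb with h | h
    · simp [Nat.choose_eq_zero_of_lt h]
    · have : q.coeff b = 0 := by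
        apply coeff_eq_zero_of_degree_lt
        exact lt_of_le_of_lt hq (by exact_mod_cast lt_of_le_of_lt hm h)
      simp [this]
  · intro hmem
    have : q.natDegree < m := by
      simp only [Finset.mem_range, not_lt] at hmem; omega
    simp [coeff_eq_zero_of_natDegree_lt this]

lemma polyDelta_degree_lt (q : ℂ[X]) (d : ℕ) (hq : q.degree ≤ (d : ℕ)) :
    (polyDelta q).degree < (d : ℕ) :=
  (degree_lt_iff_coeff_zero _ _).mpr fun m hm => polyDelta_coeff_eq_zero q d m hq hm

lemma polyDelta_coeff_top (q : ℂ[X]) (d : ℕ) (hq : q.degree ≤ ((d + 1 : ℕ) : WithBot ℕ)) :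
    (polyDelta q).coeff d = ((d : ℂ) + 1) * q.coeff (d + 1) := by
  rw [polyDelta, coeff_sub, comp_coeff q (q.natDegree + d + 2) d (by omega)]
  have hsub : ({d, d + 1} : Finset ℕ) ⊆ Finset.range (q.natDegree + d + 2) := by
    intro x hx; simp only [Finset.mem_insert, Finset.mem_singleton] at hx
    rcases hx with rfl | rfl <;> simp <;> omega
  rw [← Finset.sum_subset hsub]
  · rw [Finset.sum_pair (by omega : d ≠ d + 1), Nat.choose_self, Nat.choose_succ_self_right]
    push_cast; ring
  · intro x _ hx
    simp only [Finset.mem_insert, Finset.mem_singleton, not_or] at hx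
    rcases lt_or_gt_of_ne hx.1 with h | h
    · simp [Nat.choose_eq_zero_of_lt h]
    · have : q.coeff x = 0 := by
        apply coeff_eq_zero_of_degree_lt
        exact lt_of_le_of_lt hq (by exact_mod_cast (by omega : d + 1 < x))
      simp [this]

lemma polyDelta_mul (p q : ℂ[X]) :
    polyDelta (p * q) = polyDelta p * q.comp (X + C 1) + p * polyDelta q := by
  simp only [polyDelta, mul_comp]; ring

lemma coeff_mul_top (a b : ℂ[X]) (i j : ℕ) (ha : a.degree ≤ (i : ℕ)) (hb : b.degree ≤ (j : ℕ)) :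
    (a * b).coeff (i + j) = a.coeff i * b.coeff j := by
  rw [coeff_mul]
  apply Finset.sum_eq_single (i, j)
  · rintro ⟨x, y⟩ hxy hne
    rw [Finset.HasAntidiagonal.mem_antidiagonal] at hxy
    have hxi : x ≠ i := by
      rintro rfl
      exact hne (by simp [Prod.ext_iff]; omega)
    rcases lt_or_gt_of_ne hxi with h | h
    · have : b.coeff y = 0 :=
        coeff_eq_zero_of_degree_lt (lt_of_le_of_lt hb (by exact_mod_cast (by omega : j < y)))
      simp [this]
    · have : a.coeff x = 0 :=
        coeff_eq_zero_of_degree_lt (lt_of_le_of_lt ha (by exact_mod_cast h))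
      simp [this]
  · intro h
    exact absurd (Finset.HasAntidiagonal.mem_antidiagonal.mpr (rfl : i + j = i + j)) h

section MOP
variable (L : Polynomial ℂ →ₗ[ℂ] ℂ) (P : ℕ → Polynomial ℂ) (h : ℕ → ℂ)

lemma sub_lead_degree_lt (hmon : ∀ n, (P n).Monic) (hdeg : ∀ n, (P n).natDegree = n)
    (N : ℕ) (p : ℂ[X]) (hp : p.degree ≤ (N : ℕ)) :
    (p - C (p.coeff N) * P N).degree < (N : ℕ) := by
  rw [degree_lt_iff_coeff_zero]
  intro j hj
  rcases eq_or_lt_of_le hj with rfl | hj'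
  · have h1 : (P N).coeff N = 1 := by
      have := (hmon N).coeff_natDegree
      rwa [hdeg N] at this
    simp [coeff_sub, coeff_C_mul, h1]
  · have h1 : p.coeff j = 0 :=
      coeff_eq_zero_of_degree_lt (lt_of_le_of_lt hp (by exact_mod_cast hj'))
    have h2 : (P N).coeff j = 0 := by
      apply coeff_eq_zero_of_natDegree_lt; rw [hdeg]; omega
    simp [coeff_sub, coeff_C_mul, h1, h2]

lemma span_mem (hmon : ∀ n, (P n).Monic) (hdeg : ∀ n, (P n).natDegree = n) :
    ∀ (N : ℕ) (p : ℂ[X]), p.degree < (N : ℕ) →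
      p ∈ Submodule.span ℂ (P '' Set.Iio N) := by
  intro N
  induction N with
  | zero =>
    intro p hp
    have : p = 0 := by
      rw [← degree_eq_bot]
      exact Nat.WithBot.lt_zero_iff.mp (by exact_mod_cast hp)
    simp [this]
  | succ N ih =>
    intro p hp
    have hple : p.degree ≤ (N : ℕ) := by
      rw [degree_le_iff_coeff_zero]
      intro m hm
      have hm' : (N + 1 : ℕ) ≤ m := by exact_mod_cast (by exact_mod_cast hm : (N : WithBot ℕ) < m)
      exact (degree_lt_iff_coeff_zero _ _).mp hp m hm'
    have h1 := sub_lead_degree_lt P hmon hdeg N p hple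
    have h2 := ih _ h1
    have hmono : Submodule.span ℂ (P '' Set.Iio N) ≤ Submodule.span ℂ (P '' Set.Iio (N + 1)) :=
      Submodule.span_mono (Set.image_mono (fun x hx => lt_trans hx (Nat.lt_succ_self N)))
    have h3 : C (p.coeff N) * P N ∈ Submodule.span ℂ (P '' Set.Iio (N + 1)) := by
      rw [C_mul']
      exact Submodule.smul_mem _ _ (Submodule.subset_span ⟨N, Nat.lt_succ_self N, rfl⟩)
    have := Submodule.add_mem _ (hmono h2) h3
    simpa using this

lemma orth_lt (hmon : ∀ n, (P n).Monic) (hdeg : ∀ n, (P n).natDegree = n)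
    (horth : ∀ k n, L (P k * P n) = if k = n then h n else 0)
    (N : ℕ) (p : ℂ[X]) (hp : p.degree < (N : ℕ)) : L (p * P N) = 0 := by
  have hmem := span_mem P hmon hdeg N p hp
  have hsub : P '' Set.Iio N ⊆ ↑(LinearMap.ker (L ∘ₗ LinearMap.mulRight ℂ (P N))) := by
    rintro _ ⟨j, hj, rfl⟩
    simp only [SetLike.mem_coe, LinearMap.mem_ker, LinearMap.comp_apply,
      LinearMap.mulRight_apply]
    rw [horth j N, if_neg (by rw [Set.mem_Iio] at hj; omega)]
  have := Submodule.span_le.mpr hsub hmem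
  simpa using this

lemma proj (hmon : ∀ n, (P n).Monic) (hdeg : ∀ n, (P n).natDegree = n)
    (horth : ∀ k n, L (P k * P n) = if k = n then h n else 0)
    (N : ℕ) (p : ℂ[X]) (hp : p.degree ≤ (N : ℕ)) : L (p * P N) = p.coeff N * h N := by
  have h1 := sub_lead_degree_lt P hmon hdeg N p hp
  have h2 := orth_lt L P h hmon hdeg horth N _ h1
  have h3 : p * P N = (p - C (p.coeff N) * P N) * P N + p.coeff N • (P N * P N) := by
    rw [smul_eq_C_mul]; ring
  rw [h3, map_add, map_smul, h2, horth N N, if_pos rfl, zero_add, smul_eq_mul]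

lemma vanish (hmon : ∀ n, (P n).Monic) (hdeg : ∀ n, (P n).natDegree = n)
    (hh : ∀ n, h n ≠ 0)
    (horth : ∀ k n, L (P k * P n) = if k = n then h n else 0) :
    ∀ (N : ℕ) (D : ℂ[X]), D.degree < (N : ℕ) → (∀ k, k < N → L (D * P k) = 0) → D = 0 := by
  intro N
  induction N with
  | zero =>
    intro D hdeg' _
    rw [← degree_eq_bot]
    exact Nat.WithBot.lt_zero_iff.mp (by exact_mod_cast hdeg')
  | succ N ih =>
    intro D hdeg' hvan
    have hle : D.degree ≤ (N : ℕ) := by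
      rw [degree_le_iff_coeff_zero]
      intro m hm
      have hm' : (N + 1 : ℕ) ≤ m := by exact_mod_cast (by exact_mod_cast hm : (N : WithBot ℕ) < m)
      exact (degree_lt_iff_coeff_zero _ _).mp hdeg' m hm'
    have hc : D.coeff N = 0 := by
      have hp := proj L P h hmon hdeg horth N D hle
      rw [hvan N (Nat.lt_succ_self N)] at hp
      exact (mul_eq_zero.mp hp.symm).resolve_right (hh N)
    apply ih
    · rw [degree_lt_iff_coeff_zero]
      intro m hm
      rcases eq_or_lt_of_le hm with rfl | hm'
      · exact hc
      · exact (degree_lt_iff_coeff_zero _ _).mp hdeg' m (by omega)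
    · intro k hk; exact hvan k (by omega)

end MOP

lemma key_coeff (Λ q : ℂ[X]) (m : ℕ) (hΛ : Λ.degree ≤ ((3 : ℕ) : WithBot ℕ))
    (hq : q.degree ≤ (m : ℕ)) :
    (Λ * polyDelta q).degree ≤ ((m + 2 : ℕ) : WithBot ℕ) ∧
    (Λ * polyDelta q).coeff (m + 2) = Λ.coeff 3 * ((m : ℂ) * q.coeff m) := by
  rcases m with _ | d
  · have hz : polyDelta q = 0 := by
      ext j
      simpa using polyDelta_coeff_eq_zero q 0 j hq (Nat.zero_le j)
    simp [hz]
  · have hΔdeg : (polyDelta q).degree ≤ ((d : ℕ) : WithBot ℕ) := by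
      rw [degree_le_iff_coeff_zero]
      intro j hj
      have hj' : (d : ℕ) < j := by exact_mod_cast hj
      exact polyDelta_coeff_eq_zero q (d + 1) j hq (by omega)
    constructor
    · refine le_trans (degree_mul_le _ _) (le_trans (add_le_add hΛ hΔdeg) ?_)
      have : ((3 : ℕ) : WithBot ℕ) + ((d : ℕ) : WithBot ℕ) = ((3 + d : ℕ) : WithBot ℕ) := by
        exact_mod_cast rfl
      rw [this]
      exact_mod_cast (by omega : 3 + d ≤ d + 1 + 2)
    · have hidx : d + 1 + 2 = 3 + d := by omega
      rw [hidx, coeff_mul_top Λ (polyDelta q) 3 d hΛ hΔdeg,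
        polyDelta_coeff_top q d (by exact_mod_cast hq)]
      push_cast; ring

/-- Converse part of Theorem 1: if `L₀, L₁` admit MOPs and there are polynomials
`Λ₂` (degree exactly 2) and `Λ₃` (degree at most 3) with
`λ₂^{(2)} + (n−1)λ₃^{(3)} ≠ 0` for all `n ≥ 1`, such that `Δ*L₁ = Λ₂L₀` and
`L₁ = Λ₃L₀`, then `{L₀, L₁}` is a `Δ`-coherent pair of the second kind with
`τ_n = [λ₂^{(2)} + (n−1)λ₃^{(3)}]/(n+1) · h_{n+1}^{(0)}/h_{n−1}^{(1)} ≠ 0`. -/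
theorem functional_relations_imply_coherent_pair (L₀ L₁ : Polynomial ℂ →ₗ[ℂ] ℂ)
    (P₀ P₁ : ℕ → Polynomial ℂ) (h₀ h₁ : ℕ → ℂ)
    (hmonic₀ : ∀ n, (P₀ n).Monic) (hdeg₀ : ∀ n, (P₀ n).natDegree = n)
    (hmonic₁ : ∀ n, (P₁ n).Monic) (hdeg₁ : ∀ n, (P₁ n).natDegree = n)
    (hh₀ : ∀ n, h₀ n ≠ 0) (hh₁ : ∀ n, h₁ n ≠ 0)
    (horth₀ : ∀ k n, L₀ (P₀ k * P₀ n) = if k = n then h₀ n else 0)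
    (horth₁ : ∀ k n, L₁ (P₁ k * P₁ n) = if k = n then h₁ n else 0)
    (Λ₂ Λ₃ : Polynomial ℂ)
    (hΛ₂deg : Λ₂.natDegree ≤ 2) (hΛ₂ : Λ₂.coeff 2 ≠ 0) (hΛ₃deg : Λ₃.natDegree ≤ 3)
    (hadm : ∀ n : ℕ, 1 ≤ n → Λ₂.coeff 2 + ((n : ℂ) - 1) * Λ₃.coeff 3 ≠ 0)
    (hrel₁ : ∀ p : Polynomial ℂ, L₁ (polyDelta p) = -(L₀ (Λ₂ * p)))
    (hrel₂ : ∀ p : Polynomial ℂ, L₁ p = L₀ (Λ₃ * p)) :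
    ∀ n : ℕ, 1 ≤ n →
      (Λ₂.coeff 2 + ((n : ℂ) - 1) * Λ₃.coeff 3) / ((n : ℂ) + 1) *
          (h₀ (n + 1) / h₁ (n - 1)) ≠ 0 ∧
      polyDelta (P₀ (n + 1)) =
        C ((n : ℂ) + 1) * (P₁ n -
          C ((Λ₂.coeff 2 + ((n : ℂ) - 1) * Λ₃.coeff 3) / ((n : ℂ) + 1) *
            (h₀ (n + 1) / h₁ (n - 1))) * P₁ (n - 1)) := by
  intro n hn
  obtain ⟨m, rfl⟩ : ∃ m, n = m + 1 := ⟨n - 1, by omega⟩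
  have hsub : m + 1 - 1 = m := by omega
  have hcast1 : ((m + 1 : ℕ) : ℂ) - 1 = (m : ℂ) := by push_cast; ring
  have hcast2 : ((m + 1 : ℕ) : ℂ) + 1 = (m : ℂ) + 2 := by push_cast; ring
  rw [hsub, hcast1, hcast2]
  set lam2 := Λ₂.coeff 2 with hlam2
  set lam3 := Λ₃.coeff 3 with hlam3
  set τ : ℂ := (lam2 + (m : ℂ) * lam3) / ((m : ℂ) + 2) * (h₀ (m + 1 + 1) / h₁ m) with hτdef
  have hm2 : ((m : ℂ) + 2) ≠ 0 := by
    have h : ((m + 2 : ℕ) : ℂ) ≠ 0 := Nat.cast_ne_zero.mpr (by omega)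
    push_cast at h; exact h
  have hnum : lam2 + (m : ℂ) * lam3 ≠ 0 := by
    have := hadm (m + 1) (by omega); rwa [hcast1] at this
  have hτne : τ ≠ 0 :=
    mul_ne_zero (div_ne_zero hnum hm2) (div_ne_zero (hh₀ _) (hh₁ _))
  have hτeq : ((m : ℂ) + 2) * τ * h₁ m = (lam2 + (m : ℂ) * lam3) * h₀ (m + 1 + 1) := by
    have hbm : h₁ m ≠ 0 := hh₁ m
    rw [hτdef]
    field_simp
  clear_value τ
  refine ⟨hτne, ?_⟩
  set p : ℂ[X] := P₀ (m + 1 + 1) with hpdef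
  have hpdeg : p.degree ≤ ((m + 1 + 1 : ℕ) : WithBot ℕ) := by
    rw [hpdef]; exact le_trans degree_le_natDegree (by rw [hdeg₀])
  have hptop : p.coeff (m + 1 + 1) = 1 := by
    have := (hmonic₀ (m + 1 + 1)).coeff_natDegree
    rwa [hdeg₀] at this
  have hP1top : (P₁ (m + 1)).coeff (m + 1) = 1 := by
    have := (hmonic₁ (m + 1)).coeff_natDegree
    rwa [hdeg₁] at this
  set D : ℂ[X] := polyDelta p - C ((m : ℂ) + 2) * (P₁ (m + 1) - C τ * P₁ m) with hDdef
  have hdegD : D.degree < ((m + 1 : ℕ) : WithBot ℕ) := by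
    rw [degree_lt_iff_coeff_zero]
    intro j hj
    rcases eq_or_lt_of_le hj with rfl | hj'
    · have h1 : (polyDelta p).coeff (m + 1) = ((m + 1 : ℕ) : ℂ) * p.coeff (m + 1 + 1) + 1 * p.coeff (m + 1 + 1) := by
        have := polyDelta_coeff_top p (m + 1) hpdeg
        rw [this]; ring
      have h2 : (P₁ m).coeff (m + 1) = 0 := by
        apply coeff_eq_zero_of_natDegree_lt; rw [hdeg₁]; omega
      rw [hDdef]
      simp only [coeff_sub, coeff_C_mul, coeff_sub, h1, hptop, hP1top, h2]
      push_cast; ring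
    · have hj2 : m + 1 + 1 ≤ j := by omega
      have h1 : (polyDelta p).coeff j = 0 :=
        polyDelta_coeff_eq_zero p (m + 1 + 1) j hpdeg hj2
      have h2 : (P₁ (m + 1)).coeff j = 0 := by
        apply coeff_eq_zero_of_natDegree_lt; rw [hdeg₁]; omega
      have h3 : (P₁ m).coeff j = 0 := by
        apply coeff_eq_zero_of_natDegree_lt; rw [hdeg₁]; omega
      rw [hDdef, coeff_sub, coeff_C_mul, coeff_sub, coeff_C_mul, h1, h2, h3]
      ring
  have hvan : ∀ k, k < m + 1 → L₁ (D * P₁ k) = 0 := by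
    intro k hk
    set q : ℂ[X] := (P₁ k).comp (X - C 1) with hqdef
    have hq1 : q.comp (X + C 1) = P₁ k := by
      rw [hqdef, comp_assoc]
      have e : (X - C 1 : ℂ[X]).comp (X + C 1) = X := by
        rw [sub_comp, X_comp, C_comp]; ring
      rw [e, comp_X]
    have hqnd : q.natDegree = k := by
      rw [hqdef, natDegree_comp, natDegree_X_sub_C, hdeg₁, mul_one]
    have hqdeg : q.degree ≤ ((k : ℕ) : WithBot ℕ) := by
      exact le_trans degree_le_natDegree (by rw [hqnd])
    have hqtop : q.coeff k = 1 := by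
      have := ((hmonic₁ k).comp_X_sub_C 1).coeff_natDegree
      rwa [hqnd] at this
    have hsplit : L₁ (polyDelta p * P₁ k) =
        -(L₀ ((Λ₂ * q) * p)) - L₀ ((Λ₃ * polyDelta q) * p) := by
      have e1 : polyDelta p * P₁ k = polyDelta (p * q) - p * polyDelta q := by
        rw [polyDelta_mul, hq1]; ring
      rw [e1, map_sub, hrel₁ (p * q), hrel₂ (p * polyDelta q)]
      have e2 : Λ₂ * (p * q) = (Λ₂ * q) * p := by ring
      have e3 : Λ₃ * (p * polyDelta q) = (Λ₃ * polyDelta q) * p := by ring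
      rw [e2, e3]
    have hΛ₂d : Λ₂.degree ≤ ((2 : ℕ) : WithBot ℕ) := natDegree_le_iff_degree_le.mp hΛ₂deg
    have hΛ₃d : Λ₃.degree ≤ ((3 : ℕ) : WithBot ℕ) := natDegree_le_iff_degree_le.mp hΛ₃deg
    have hA : (Λ₂ * q).degree ≤ ((2 + k : ℕ) : WithBot ℕ) := by
      refine le_trans (degree_mul_le _ _) (le_trans (add_le_add hΛ₂d hqdeg) ?_)
      rw [Nat.cast_add]
    have hkey := key_coeff Λ₃ q k hΛ₃d hqdeg
    have hA' : (Λ₂ * q).degree ≤ ((m + 1 + 1 : ℕ) : WithBot ℕ) :=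
      le_trans hA (by exact_mod_cast (by omega : 2 + k ≤ m + 1 + 1))
    have hB' : (Λ₃ * polyDelta q).degree ≤ ((m + 1 + 1 : ℕ) : WithBot ℕ) :=
      le_trans hkey.1 (by exact_mod_cast (by omega : k + 2 ≤ m + 1 + 1))
    have hL2 := proj L₀ P₀ h₀ hmonic₀ hdeg₀ horth₀ (m + 1 + 1) _ hA'
    have hL3 := proj L₀ P₀ h₀ hmonic₀ hdeg₀ horth₀ (m + 1 + 1) _ hB'
    have hmain : L₁ (polyDelta p * P₁ k) =
        -((Λ₂ * q).coeff (m + 1 + 1) + (Λ₃ * polyDelta q).coeff (m + 1 + 1)) * h₀ (m + 1 + 1) := by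
      rw [hsplit, hL2, hL3]; ring
    have hD : D * P₁ k = polyDelta p * P₁ k + (-((m : ℂ) + 2)) • (P₁ (m + 1) * P₁ k)
        + (((m : ℂ) + 2) * τ) • (P₁ m * P₁ k) := by
      rw [hDdef, smul_eq_C_mul, smul_eq_C_mul, map_neg, map_mul, map_add]
      ring
    rw [hD, map_add, map_add, map_smul, map_smul, hmain, horth₁ (m + 1) k, horth₁ m k,
      if_neg (by omega : ¬ m + 1 = k)]
    simp only [smul_eq_mul]
    by_cases hkm : k = m
    · subst hkm
      rw [if_pos rfl]
      have hc2 : (Λ₂ * q).coeff (k + 1 + 1) = lam2 := by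
        have hidx : k + 1 + 1 = 2 + k := by omega
        rw [hidx, coeff_mul_top Λ₂ q 2 k hΛ₂d hqdeg, hqtop, hlam2, mul_one]
      have hc3 : (Λ₃ * polyDelta q).coeff (k + 1 + 1) = lam3 * ((k : ℂ) * 1) := by
        have hidx : k + 1 + 1 = k + 2 := by omega
        rw [hidx, hkey.2, hqtop, hlam3]
      rw [hc2, hc3]
      linear_combination hτeq
    · rw [if_neg (by omega : ¬ m = k)]
      have hc2 : (Λ₂ * q).coeff (m + 1 + 1) = 0 :=
        coeff_eq_zero_of_degree_lt (lt_of_le_of_lt hA (by exact_mod_cast (by omega : 2 + k < m + 1 + 1)))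
      have hc3 : (Λ₃ * polyDelta q).coeff (m + 1 + 1) = 0 :=
        coeff_eq_zero_of_degree_lt (lt_of_le_of_lt hkey.1 (by exact_mod_cast (by omega : k + 2 < m + 1 + 1)))
      rw [hc2, hc3]
      ring
  have hD0 : D = 0 := vanish L₁ P₁ h₁ hmonic₁ hdeg₁ hh₁ horth₁ (m + 1) D hdegD hvan
  have := sub_eq_zero.mp (hDdef ▸ hD0)
  exact this
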